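/- For a short exact sequence 0 → M' → M → M'' → 0 of finitely generated modules over a commutative ring R, one has the inclusion Fitt_R(M') · Fitt_R(M'') ⊆ Fitt_R(M). -/

import Mathlib

/-- The 0-th Fitting ideal of an `R`-module `M`: for any (equivalently, some)
finite presentation `R^n →ₗ M → 0`, the ideal generated by the `n × n` minors of
the relations, i.e. by determinants of square matrices all of whose rows are
relations. We take the supremum over all finite free presentations; for a
finitely generated module all the inner ideals agree. -/
noncomputable def fittingIdeal (R : Type*) [CommRing R] (M : Type*) [AddCommGroup M]
    [Module R M] : Ideal R :=
  ⨆ (n : ℕ) (π : (Fin n → R) →ₗ[R] M) (_ : Function.Surjective π),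
    Ideal.span {d | ∃ A : Matrix (Fin n) (Fin n) R, (∀ i, π (A i) = 0) ∧ d = A.det}

theorem key (R : Type*) [CommRing R]
    (M' M M'' : Type*) [AddCommGroup M'] [Module R M'] [AddCommGroup M] [Module R M]
    [AddCommGroup M''] [Module R M'']
    (f : M' →ₗ[R] M) (g : M →ₗ[R] M'')
    (hg : Function.Surjective g)
    (hfg : Function.Exact f g)
    (n' n'' : ℕ) (π' : (Fin n' → R) →ₗ[R] M') (π'' : (Fin n'' → R) →ₗ[R] M'')
    (hπ' : Function.Surjective π') (hπ'' : Function.Surjective π'') :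
    Ideal.span {d | ∃ A : Matrix (Fin n') (Fin n') R, (∀ i, π' (A i) = 0) ∧ d = A.det} *
    Ideal.span {d | ∃ A : Matrix (Fin n'') (Fin n'') R, (∀ i, π'' (A i) = 0) ∧ d = A.det} ≤
    fittingIdeal R M := by
  -- lift π'' through g
  obtain ⟨σ, hσ⟩ := Module.projective_lifting_property g π'' hg
  -- the combined presentation
  set L₁ : (Fin (n' + n'') → R) →ₗ[R] (Fin n' → R) :=
    LinearMap.funLeft R R (Fin.castAdd n'') with hL₁
  set L₂ : (Fin (n' + n'') → R) →ₗ[R] (Fin n'' → R) :=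
    LinearMap.funLeft R R (Fin.natAdd n') with hL₂
  set π : (Fin (n' + n'') → R) →ₗ[R] M :=
    (f ∘ₗ π' ∘ₗ L₁) + (σ ∘ₗ L₂) with hπdef
  have hπval : ∀ v, π v = f (π' (fun i => v (Fin.castAdd n'' i))) +
      σ (fun j => v (Fin.natAdd n' j)) := by
    intro v; rfl
  have hπsurj : Function.Surjective π := by
    intro m
    obtain ⟨y, hy⟩ := hπ'' (g m)
    have hker : g (m - σ y) = 0 := by
      have : g (σ y) = π'' y := LinearMap.congr_fun hσ y
      simp [map_sub, this, hy]
    obtain ⟨m', hm'⟩ := (hfg (m - σ y)).mp hker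
    obtain ⟨x, hx⟩ := hπ' m'
    refine ⟨Sum.elim x y ∘ finSumFinEquiv.symm, ?_⟩
    rw [hπval]
    simp only [Function.comp_apply, finSumFinEquiv_symm_apply_castAdd,
      finSumFinEquiv_symm_apply_natAdd, Sum.elim_inl, Sum.elim_inr]
    rw [hx, hm']
    abel
  rw [Ideal.span_mul_span, Ideal.span_le]
  intro d hd
  rw [Set.mem_mul] at hd
  obtain ⟨d', ⟨A', hA', rfl⟩, d'', ⟨A'', hA'', rfl⟩, rfl⟩ := hd
  -- build C : rows c j with f (π' (C j)) = - σ (A'' j)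
  have hC : ∀ j : Fin n'', ∃ c : Fin n' → R, f (π' c) = - σ (A'' j) := by
    intro j
    have : g (σ (A'' j)) = 0 := by
      have : g (σ (A'' j)) = π'' (A'' j) := LinearMap.congr_fun hσ (A'' j)
      rw [this, hA'']
    obtain ⟨m', hm'⟩ := (hfg _).mp this
    obtain ⟨c, hc⟩ := hπ' (-m')
    exact ⟨c, by rw [hc, map_neg, hm']⟩
  choose C hCspec using hC
  set B : Matrix (Fin (n' + n'')) (Fin (n' + n'')) R :=
    Matrix.reindex finSumFinEquiv finSumFinEquiv
      (Matrix.fromBlocks A' 0 (Matrix.of C) A'') with hB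
  have hBrows : ∀ i, π (B i) = 0 := by
    intro i
    rw [hπval]
    rcases h : finSumFinEquiv.symm i with i' | j
    · have h1 : (fun k => B i (Fin.castAdd n'' k)) = A' i' := by
        funext k
        simp [hB, Matrix.reindex_apply, Matrix.submatrix_apply, h,
          finSumFinEquiv_symm_apply_castAdd]
      have h2 : (fun k => B i (Fin.natAdd n' k)) = 0 := by
        funext k
        simp [hB, Matrix.reindex_apply, Matrix.submatrix_apply, h,
          finSumFinEquiv_symm_apply_natAdd]
      rw [h1, h2, hA' i']
      simp
    · have h1 : (fun k => B i (Fin.castAdd n'' k)) = C j := by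
        funext k
        simp [hB, Matrix.reindex_apply, Matrix.submatrix_apply, h,
          finSumFinEquiv_symm_apply_castAdd]
      have h2 : (fun k => B i (Fin.natAdd n' k)) = A'' j := by
        funext k
        simp [hB, Matrix.reindex_apply, Matrix.submatrix_apply, h,
          finSumFinEquiv_symm_apply_natAdd]
      rw [h1, h2, hCspec j]
      abel
  have hdet : A'.det * A''.det = B.det := by
    rw [hB, Matrix.det_reindex_self, Matrix.det_fromBlocks_zero₁₂]
  rw [hdet]
  have : B.det ∈ Ideal.span {d | ∃ A : Matrix (Fin (n' + n'')) (Fin (n' + n'')) R,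
      (∀ i, π (A i) = 0) ∧ d = A.det} :=
    Ideal.subset_span ⟨B, hBrows, rfl⟩
  refine SetLike.le_def.mp ?_ this
  rw [fittingIdeal]
  exact le_iSup_of_le (n' + n'') (le_iSup_of_le π (le_iSup_of_le hπsurj le_rfl))

/-- For a short exact sequence `0 → M' → M → M'' → 0` of finitely generated
modules over a commutative ring `R`, we have `Fitt(M') · Fitt(M'') ⊆ Fitt(M)`. -/
theorem fittingIdeal_mul_le_of_exact (R : Type*) [CommRing R]
    (M' M M'' : Type*) [AddCommGroup M'] [Module R M'] [AddCommGroup M] [Module R M]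
    [AddCommGroup M''] [Module R M'']
    [Module.Finite R M'] [Module.Finite R M] [Module.Finite R M'']
    (f : M' →ₗ[R] M) (g : M →ₗ[R] M'')
    (hf : Function.Injective f) (hg : Function.Surjective g)
    (hfg : Function.Exact f g) :
    fittingIdeal R M' * fittingIdeal R M'' ≤ fittingIdeal R M := by

  rw [fittingIdeal, fittingIdeal]
  rw [Submodule.iSup_mul]
  refine iSup_le fun n' => ?_
  rw [Submodule.iSup_mul]
  refine iSup_le fun π' => ?_
  rw [Submodule.iSup_mul]
  refine iSup_le fun hπ' => ?_
  rw [Submodule.mul_iSup]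
  refine iSup_le fun n'' => ?_
  rw [Submodule.mul_iSup]
  refine iSup_le fun π'' => ?_
  rw [Submodule.mul_iSup]
  refine iSup_le fun hπ'' => ?_
  exact key R M' M M'' f g hg hfg n' n'' π' π'' hπ' hπ''
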